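/- Let G=(V,E) be a graph on n vertices, π a 2-partition of V, and v a vertex. Let Y = C_π(v) and Ȳ = V∖C_π(v)∖{v}. Then h₂(π) − h₂(π⊖v) = 2(n−1)c_π(v) − n(n−1) + 2∑_{u∈Y}c_π(u) − 2∑_{u∈Ȳ}c_π(u). -/

import Mathlib

open Finset

variable {V : Type*} [Fintype V] [DecidableEq V]

/-- A 2-partition of the vertex set is given by an indicator `π : V → Bool`
(the two clusters are the preimages of `true` and `false`).
Two vertices `u ≠ v` are in conflict if they are in the same cluster but not adjacent,
or in different clusters but adjacent. -/
def Conflict (G : SimpleGraph V) (π : V → Bool) (u v : V) : Prop :=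
  u ≠ v ∧ ((π u = π v) ↔ ¬ G.Adj u v)

instance (G : SimpleGraph V) [DecidableRel G.Adj] (π : V → Bool) (u v : V) :
    Decidable (Conflict G π u v) := by
  unfold Conflict; infer_instance

/-- `C_π(v)` : the set of vertices in conflict with `v`. -/
def conflictSet (G : SimpleGraph V) [DecidableRel G.Adj] (π : V → Bool) (v : V) : Finset V :=
  Finset.univ.filter (fun u => Conflict G π v u)

/-- `c_π(v)` : the conflict number of `v`. -/
def cNum (G : SimpleGraph V) [DecidableRel G.Adj] (π : V → Bool) (v : V) : ℕ :=
  (conflictSet G π v).card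

/-- Flipping the set `F` : moving every vertex of `F` to the other cluster. -/
def flipSet (π : V → Bool) (F : Finset V) : V → Bool :=
  fun v => if v ∈ F then !(π v) else π v

/-- `h₁(π)` : the total conflict number. -/
def h1 (G : SimpleGraph V) [DecidableRel G.Adj] (π : V → Bool) : ℕ :=
  ∑ v, cNum G π v

/-- `h₂(π)` : the sum of squared conflict numbers. -/
def h2 (G : SimpleGraph V) [DecidableRel G.Adj] (π : V → Bool) : ℕ :=
  ∑ v, (cNum G π v) ^ 2

section Aux
variable (G : SimpleGraph V) [DecidableRel G.Adj] (π : V → Bool)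

lemma conflict_comm {a b : V} : Conflict G π a b ↔ Conflict G π b a := by
  unfold Conflict
  constructor <;> rintro ⟨h1, h2⟩ <;>
    exact ⟨h1.symm, by rwa [eq_comm, G.adj_comm] at h2⟩

lemma conflict_flip_same {v a b : V} (ha : a ≠ v) (hb : b ≠ v) :
    Conflict G (flipSet π {v}) a b ↔ Conflict G π a b := by
  simp [Conflict, flipSet, ha, hb]

lemma conflict_flip_v {v b : V} (hb : b ≠ v) :
    Conflict G (flipSet π {v}) v b ↔ ¬ Conflict G π v b := by
  have hvb : v ≠ b := hb.symm
  simp only [Conflict, flipSet, if_pos (mem_singleton_self v), if_neg (by simpa using hb),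
    hvb, ne_eq, not_false_eq_true, true_and, not_and, not_iff]
  cases π v <;> cases π b <;> simp <;> tauto

lemma conflictSet_flip_self (v : V) :
    conflictSet G (flipSet π {v}) v = (conflictSet G π v)ᶜ.erase v := by
  ext u
  by_cases hu : u = v
  · subst hu; simp [conflictSet] <;> simp [Conflict]
  · simp only [conflictSet, mem_filter, mem_univ, true_and, mem_erase, mem_compl]
    rw [conflict_flip_v G π hu]
    simp [hu]

end Aux

section Aux2
variable (G : SimpleGraph V) [DecidableRel G.Adj] (π : V → Bool)

lemma conflictSet_flip_other {v u : V} (hu : u ≠ v) :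
    conflictSet G (flipSet π {v}) u =
      if Conflict G π v u then (conflictSet G π u).erase v
      else insert v (conflictSet G π u) := by
  have key : Conflict G (flipSet π {v}) u v ↔ ¬ Conflict G π v u := by
    rw [conflict_comm, conflict_flip_v G π hu]
  ext w
  by_cases hw : w = v
  · by_cases hc : Conflict G π v u <;>
      simp [conflictSet, hw, key, hc]
  · by_cases hc : Conflict G π v u <;>
      simp [conflictSet, hc, mem_erase, mem_insert, hw,
        conflict_flip_same G π hu hw]

lemma cNum_flip_self (v : V) :
    (cNum G (flipSet π {v}) v : ℤ) = (Fintype.card V : ℤ) - 1 - cNum G π v := by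
  have hv : v ∈ (conflictSet G π v)ᶜ := by simp [conflictSet] <;> simp [Conflict]
  have hle : (conflictSet G π v).card ≤ Fintype.card V := card_le_univ _
  have h1 : 1 ≤ ((conflictSet G π v)ᶜ).card := card_pos.mpr ⟨v, hv⟩
  rw [cNum, conflictSet_flip_self, card_erase_of_mem hv, Nat.cast_sub h1, card_compl,
    Nat.cast_sub hle]
  simp only [cNum]
  push_cast
  ring

lemma cNum_flip_mem {v u : V} (hu : u ≠ v) (hc : Conflict G π v u) :
    (cNum G (flipSet π {v}) u : ℤ) = (cNum G π u : ℤ) - 1 := by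
  have hmem : v ∈ conflictSet G π u := by
    simp [conflictSet]; exact (conflict_comm G π).mp hc
  rw [cNum, conflictSet_flip_other G π hu, if_pos hc, card_erase_of_mem hmem]
  have : 1 ≤ (conflictSet G π u).card := card_pos.mpr ⟨v, hmem⟩
  push_cast [Nat.cast_sub this]
  rfl

lemma cNum_flip_not_mem {v u : V} (hu : u ≠ v) (hc : ¬ Conflict G π v u) :
    (cNum G (flipSet π {v}) u : ℤ) = (cNum G π u : ℤ) + 1 := by
  have hmem : v ∉ conflictSet G π u := by
    simp [conflictSet]; intro h; exact hc ((conflict_comm G π).mp h)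
  rw [cNum, conflictSet_flip_other G π hu, if_neg hc, card_insert_of_notMem hmem]
  push_cast
  rfl

end Aux2

/-- computation in Lemma 9: with `Y = C_π(v)` and
`Ȳ = V ∖ C_π(v) ∖ {v}`,
`h₂(π) − h₂(π⊖v) = 2(n−1)c_π(v) − n(n−1) + 2∑_{u∈Y} c_π(u) − 2∑_{u∈Ȳ} c_π(u)`. -/
theorem h2_flip_single_diff (G : SimpleGraph V) [DecidableRel G.Adj] (π : V → Bool) (v : V) :
    (h2 G π : ℤ) - (h2 G (flipSet π {v}) : ℤ) =
      2 * ((Fintype.card V : ℤ) - 1) * (cNum G π v : ℤ)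
        - (Fintype.card V : ℤ) * ((Fintype.card V : ℤ) - 1)
        + 2 * ∑ u ∈ conflictSet G π v, (cNum G π u : ℤ)
        - 2 * ∑ u ∈ ((conflictSet G π v)ᶜ).erase v, (cNum G π u : ℤ) := by
  classical
  set Y := conflictSet G π v with hYdef
  set Yb := Yᶜ.erase v with hYbdef
  have hvY : v ∉ Y := by simp [hYdef, conflictSet] <;> simp [Conflict]
  have hvYc : v ∈ Yᶜ := mem_compl.mpr hvY
  have hvYb : v ∉ Yb := notMem_erase _ _
  have hdisj : Disjoint Y Yb := disjoint_left.mpr fun x hx hx' =>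
    (mem_compl.mp (mem_of_mem_erase hx')) hx
  have hunion : Y ∪ Yb = univ.erase v := by
    ext x
    by_cases hx : x = v
    · simp [hx, hvY, hvYb]
    · simp only [mem_union, mem_erase, hYbdef, mem_compl, hx, ne_eq, not_false_eq_true,
        true_and, mem_univ, and_true, iff_true]
      tauto
  have hsplit : (univ : Finset V) = insert v (Y ∪ Yb) := by
    rw [hunion, insert_erase (mem_univ v)]
  have hcast : ∀ σ : V → Bool, ((h2 G σ : ℤ)) = ∑ u, (cNum G σ u : ℤ)^2 := by
    intro σ; unfold h2; push_cast; rfl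
  rw [hcast, hcast, ← Finset.sum_sub_distrib, hsplit,
    sum_insert (by rw [hunion]; exact notMem_erase _ _), sum_union hdisj]
  have hself : (cNum G (flipSet π {v}) v : ℤ) = (Fintype.card V : ℤ) - 1 - cNum G π v :=
    cNum_flip_self G π v
  have hYsum : ∑ u ∈ Y, ((cNum G π u : ℤ)^2 - (cNum G (flipSet π {v}) u : ℤ)^2)
      = ∑ u ∈ Y, (2 * (cNum G π u : ℤ) - 1) := by
    refine sum_congr rfl fun u hu => ?_
    have hne : u ≠ v := fun h => hvY (h ▸ hu)
    have hc : Conflict G π v u := (mem_filter.mp hu).2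
    rw [cNum_flip_mem G π hne hc]; ring
  have hYbsum : ∑ u ∈ Yb, ((cNum G π u : ℤ)^2 - (cNum G (flipSet π {v}) u : ℤ)^2)
      = ∑ u ∈ Yb, (-2 * (cNum G π u : ℤ) - 1) := by
    refine sum_congr rfl fun u hu => ?_
    have hne : u ≠ v := ne_of_mem_erase hu
    have hc : ¬ Conflict G π v u := by
      have := mem_compl.mp (mem_of_mem_erase hu)
      simpa [hYdef, conflictSet] using this
    rw [cNum_flip_not_mem G π hne hc]; ring
  rw [hYsum, hYbsum, hself]
  rw [sum_sub_distrib, sum_sub_distrib, ← mul_sum, ← mul_sum, sum_const, sum_const]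
  have hcardY : (Y.card : ℤ) = (cNum G π v : ℤ) := by rfl
  have hle : Y.card ≤ Fintype.card V := card_le_univ _
  have h1 : 1 ≤ (Yᶜ).card := card_pos.mpr ⟨v, hvYc⟩
  have hcardYb : (Yb.card : ℤ) = (Fintype.card V : ℤ) - 1 - (cNum G π v : ℤ) := by
    rw [hYbdef, card_erase_of_mem hvYc, Nat.cast_sub h1, card_compl, Nat.cast_sub hle,
      ← hcardY]
    push_cast; ring
  simp only [nsmul_eq_mul, hcardY, hcardYb]
  ring
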